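/- For the three-web on the domain {(x¹,x²,y¹,y²) ∈ ℝ⁴ : x¹ ≠ 0, x² ≠ 0, y¹ ≠ 0} given by f¹ = x² e^{x¹y¹}, f² = x² + y², the torsion covector satisfies a₁ = 0 and a₂ = 1/(x¹x²y¹), and the isoclinicity invariants satisfy p = q = e^{−x¹y¹}/(2(x¹x²y¹)²) ≠ 0 at every point of the domain; hence this web is nonisoclinic but, since p = q, it cannot be extended to a nonisoclinic web W(4,2,2) (class G₃). -/

import Mathlib

noncomputable section

open Matrix

/-- Partial derivative of `g` with respect to the `j`-th coordinate at the point `x`. -/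
def pd (j : Fin 2) (g : (Fin 2 → ℝ) → ℝ) (x : Fin 2 → ℝ) : ℝ :=
  deriv (fun t => g (Function.update x j t)) (x j)

variable (f : Fin 2 → (Fin 2 → ℝ) → (Fin 2 → ℝ) → ℝ)

/-- Jacobian matrix `f̄ = (∂fⁱ/∂xʲ)` with respect to the first group of variables. -/
def fbar (x y : Fin 2 → ℝ) : Matrix (Fin 2) (Fin 2) ℝ :=
  Matrix.of fun i j => pd j (fun x' => f i x' y) x

/-- Jacobian matrix `f̃ = (∂fⁱ/∂yʲ)` with respect to the second group of variables. -/
def ftil (x y : Fin 2 → ℝ) : Matrix (Fin 2) (Fin 2) ℝ :=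
  Matrix.of fun i j => pd j (fun y' => f i x y') y

/-- Mixed second partial derivative `∂²fⁱ/∂xˡ∂yᵐ`. -/
def d2 (i l m : Fin 2) (x y : Fin 2 → ℝ) : ℝ :=
  pd m (fun y' => pd l (fun x' => f i x' y') x) y

/-- Connection coefficients
`Γⁱⱼₖ = −∑_{l,m} (∂²fⁱ/∂xˡ∂yᵐ) ḡˡⱼ g̃ᵐₖ`, where `ḡ = f̄⁻¹`, `g̃ = f̃⁻¹`. -/
def Gam (i j k : Fin 2) (x y : Fin 2 → ℝ) : ℝ :=
  - ∑ l : Fin 2, ∑ m : Fin 2,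
      d2 f i l m x y * (fbar f x y)⁻¹ l j * (ftil f x y)⁻¹ m k

/-- Torsion covector `aⱼ = ∑ₖ (Γᵏⱼₖ − Γᵏₖⱼ)`. -/
def aCov (j : Fin 2) (x y : Fin 2 → ℝ) : ℝ :=
  ∑ k : Fin 2, (Gam f k j k x y - Gam f k k j x y)

/-- Covariant derivative `p_{ik} = ∑ₘ (∂aᵢ/∂xᵐ) ḡᵐₖ − ∑ⱼ aⱼ Γʲₖᵢ`. -/
def pCov (i k : Fin 2) (x y : Fin 2 → ℝ) : ℝ :=
  (∑ m : Fin 2, pd m (fun x' => aCov f i x' y) x * (fbar f x y)⁻¹ m k)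
    - ∑ j : Fin 2, aCov f j x y * Gam f j k i x y

/-- Covariant derivative `q_{ik} = ∑ₘ (∂aᵢ/∂yᵐ) g̃ᵐₖ − ∑ⱼ aⱼ Γʲᵢₖ`. -/
def qCov (i k : Fin 2) (x y : Fin 2 → ℝ) : ℝ :=
  (∑ m : Fin 2, pd m (fun y' => aCov f i x y') y * (ftil f x y)⁻¹ m k)
    - ∑ j : Fin 2, aCov f j x y * Gam f j i k x y

/-- Isoclinicity invariant `p = (p₁₂ − p₂₁)/2`. -/
def pIso (x y : Fin 2 → ℝ) : ℝ := (pCov f 0 1 x y - pCov f 1 0 x y) / 2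

/-- Isoclinicity invariant `q = (q₁₂ − q₂₁)/2`. -/
def qIso (x y : Fin 2 → ℝ) : ℝ := (qCov f 0 1 x y - qCov f 1 0 x y) / 2


/-- The web `f¹ = x² e^{x¹y¹}`, `f² = x² + y²`.
(Indices: `x 0 ↦ x¹`, `x 1 ↦ x²`, `y 0 ↦ y¹`, `y 1 ↦ y²`.) -/
noncomputable def webB : Fin 2 → (Fin 2 → ℝ) → (Fin 2 → ℝ) → ℝ :=
  ![fun x y => x 1 * Real.exp (x 0 * y 0),
    fun x y => x 1 + y 1]


variable (x y : Fin 2 → ℝ)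

lemma pd_x0_f0 : pd 0 (fun x' => webB 0 x' y) x = x 1 * y 0 * Real.exp (x 0 * y 0) := by
  have h : HasDerivAt (fun t : ℝ => x 1 * Real.exp (t * y 0))
      (x 1 * (Real.exp (x 0 * y 0) * (1 * y 0))) (x 0) :=
    (((hasDerivAt_id (x 0)).mul_const (y 0)).exp).const_mul (x 1)
  simp only [pd, webB, Matrix.cons_val_zero, Function.update_self,
    Function.update_of_ne (by decide : (1:Fin 2) ≠ 0)]
  rw [h.deriv]; ring

lemma pd_x1_f0 : pd 1 (fun x' => webB 0 x' y) x = Real.exp (x 0 * y 0) := by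
  have h : HasDerivAt (fun t : ℝ => t * Real.exp (x 0 * y 0))
      (Real.exp (x 0 * y 0)) (x 1) := by
    simpa using (hasDerivAt_id (x 1)).mul_const (Real.exp (x 0 * y 0))
  simp only [pd, webB, Matrix.cons_val_zero, Function.update_self,
    Function.update_of_ne (by decide : (0:Fin 2) ≠ 1)]
  rw [h.deriv]

lemma pd_x0_f1 : pd 0 (fun x' => webB 1 x' y) x = 0 := by
  simp only [pd, webB, Matrix.cons_val_one, Matrix.head_cons,
    Function.update_of_ne (by decide : (1:Fin 2) ≠ 0)]
  simp

lemma pd_x1_f1 : pd 1 (fun x' => webB 1 x' y) x = 1 := by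
  simp only [pd, webB, Matrix.cons_val_one, Matrix.head_cons, Function.update_self]
  simp

lemma pd_y0_f0 : pd 0 (fun y' => webB 0 x y') y = x 0 * x 1 * Real.exp (x 0 * y 0) := by
  have h : HasDerivAt (fun t : ℝ => x 1 * Real.exp (x 0 * t))
      (x 1 * (Real.exp (x 0 * y 0) * (x 0 * 1))) (y 0) :=
    (((hasDerivAt_id (y 0)).const_mul (x 0)).exp).const_mul (x 1)
  simp only [pd, webB, Matrix.cons_val_zero, Function.update_self]
  rw [h.deriv]; ring

lemma pd_y1_f0 : pd 1 (fun y' => webB 0 x y') y = 0 := by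
  simp only [pd, webB, Matrix.cons_val_zero,
    Function.update_of_ne (by decide : (0:Fin 2) ≠ 1)]
  simp

lemma pd_y0_f1 : pd 0 (fun y' => webB 1 x y') y = 0 := by
  simp only [pd, webB, Matrix.cons_val_one, Matrix.head_cons,
    Function.update_of_ne (by decide : (1:Fin 2) ≠ 0)]
  simp

lemma pd_y1_f1 : pd 1 (fun y' => webB 1 x y') y = 1 := by
  simp only [pd, webB, Matrix.cons_val_one, Matrix.head_cons, Function.update_self]
  exact (((hasDerivAt_id (y 1)).const_add (x 1))).deriv

lemma fbar_eq : fbar webB x y =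
    !![x 1 * y 0 * Real.exp (x 0 * y 0), Real.exp (x 0 * y 0); 0, 1] := by
  ext i j
  fin_cases i <;> fin_cases j <;>
    simp only [fbar, Matrix.of_apply] <;>
    first
    | exact pd_x0_f0 x y | exact pd_x1_f0 x y
    | exact pd_x0_f1 x y | exact pd_x1_f1 x y

lemma ftil_eq : ftil webB x y =
    !![x 0 * x 1 * Real.exp (x 0 * y 0), 0; 0, 1] := by
  ext i j
  fin_cases i <;> fin_cases j <;>
    simp only [ftil, Matrix.of_apply] <;>
    first
    | exact pd_y0_f0 x y | exact pd_y1_f0 x y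
    | exact pd_y0_f1 x y | exact pd_y1_f1 x y


lemma fbar_inv : (fbar webB x y)⁻¹ =
    (x 1 * y 0 * Real.exp (x 0 * y 0))⁻¹ •
      !![1, -Real.exp (x 0 * y 0); 0, x 1 * y 0 * Real.exp (x 0 * y 0)] := by
  rw [fbar_eq, Matrix.inv_def]
  simp [Matrix.det_fin_two_of, Matrix.adjugate_fin_two_of, Ring.inverse_eq_inv']

lemma ftil_inv : (ftil webB x y)⁻¹ =
    (x 0 * x 1 * Real.exp (x 0 * y 0))⁻¹ •
      !![1, 0; 0, x 0 * x 1 * Real.exp (x 0 * y 0)] := by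
  rw [ftil_eq, Matrix.inv_def]
  simp [Matrix.det_fin_two_of, Matrix.adjugate_fin_two_of, Ring.inverse_eq_inv']

lemma d2_000 : d2 webB 0 0 0 x y = x 1 * (1 + x 0 * y 0) * Real.exp (x 0 * y 0) := by
  have hfun : (fun y' => pd 0 (fun x' => webB 0 x' y') x)
      = fun y' : Fin 2 → ℝ => x 1 * y' 0 * Real.exp (x 0 * y' 0) :=
    funext fun y' => pd_x0_f0 x y'
  have h : HasDerivAt (fun t : ℝ => x 1 * t * Real.exp (x 0 * t))
      ((x 1 * 1) * Real.exp (x 0 * y 0)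
        + x 1 * y 0 * (Real.exp (x 0 * y 0) * (x 0 * 1))) (y 0) :=
    (((hasDerivAt_id (y 0)).const_mul (x 1)).mul
      (((hasDerivAt_id (y 0)).const_mul (x 0)).exp))
  rw [d2, hfun]
  simp only [pd, Function.update_self]
  rw [h.deriv]; ring

lemma d2_001 : d2 webB 0 0 1 x y = 0 := by
  have hfun : (fun y' => pd 0 (fun x' => webB 0 x' y') x)
      = fun y' : Fin 2 → ℝ => x 1 * y' 0 * Real.exp (x 0 * y' 0) :=
    funext fun y' => pd_x0_f0 x y'
  rw [d2, hfun]
  simp only [pd, Function.update_of_ne (by decide : (0:Fin 2) ≠ 1)]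
  simp

lemma d2_010 : d2 webB 0 1 0 x y = x 0 * Real.exp (x 0 * y 0) := by
  have hfun : (fun y' => pd 1 (fun x' => webB 0 x' y') x)
      = fun y' : Fin 2 → ℝ => Real.exp (x 0 * y' 0) :=
    funext fun y' => pd_x1_f0 x y'
  have h : HasDerivAt (fun t : ℝ => Real.exp (x 0 * t))
      (Real.exp (x 0 * y 0) * (x 0 * 1)) (y 0) :=
    ((hasDerivAt_id (y 0)).const_mul (x 0)).exp
  rw [d2, hfun]
  simp only [pd, Function.update_self]
  rw [h.deriv]; ring

lemma d2_011 : d2 webB 0 1 1 x y = 0 := by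
  have hfun : (fun y' => pd 1 (fun x' => webB 0 x' y') x)
      = fun y' : Fin 2 → ℝ => Real.exp (x 0 * y' 0) :=
    funext fun y' => pd_x1_f0 x y'
  rw [d2, hfun]
  simp only [pd, Function.update_of_ne (by decide : (0:Fin 2) ≠ 1)]
  simp

lemma d2_1 (l m : Fin 2) : d2 webB 1 l m x y = 0 := by
  fin_cases l
  · have hfun : (fun y' => pd 0 (fun x' => webB 1 x' y') x)
        = fun _ : Fin 2 → ℝ => (0:ℝ) := funext fun y' => pd_x0_f1 x y'
    show d2 webB 1 0 m x y = 0
    rw [d2, hfun]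
    simp [pd]
  · have hfun : (fun y' => pd 1 (fun x' => webB 1 x' y') x)
        = fun _ : Fin 2 → ℝ => (1:ℝ) := funext fun y' => pd_x1_f1 x y'
    show d2 webB 1 1 m x y = 0
    rw [d2, hfun]
    simp [pd]

lemma Gam1 (j k : Fin 2) : Gam webB 1 j k x y = 0 := by
  simp [Gam, Fin.sum_univ_two, d2_1]

lemma aCov0_eq : aCov webB 0 x y = 0 := by
  simp [aCov, Fin.sum_univ_two, Gam1, sub_self]

lemma aCov1_eq : aCov webB 1 x y = (x 0 * x 1 * y 0)⁻¹ := by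
  have hE := Real.exp_ne_zero (x 0 * y 0)
  simp only [aCov, Fin.sum_univ_two, Gam1, Gam, d2_000, d2_001, d2_010, d2_011,
    fbar_inv, ftil_inv, Matrix.smul_apply, smul_eq_mul, Matrix.cons_val', Matrix.cons_val_zero,
    Matrix.cons_val_one, Matrix.head_cons, Matrix.empty_val', Matrix.cons_val_fin_one,
    Matrix.head_fin_const, Matrix.of_apply, d2_1]
  rcases eq_or_ne (x 0) 0 with h | h
  · simp [h]
  rcases eq_or_ne (x 1) 0 with h' | h'
  · simp [h']
  rcases eq_or_ne (y 0) 0 with h'' | h''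
  · simp [h'']
  field_simp
  ring

lemma pd_a0_x (m : Fin 2) : pd m (fun x' => aCov webB 0 x' y) x = 0 := by
  have hfun : (fun x' => aCov webB 0 x' y) = fun _ : Fin 2 → ℝ => (0:ℝ) :=
    funext fun x' => aCov0_eq x' y
  rw [hfun]; simp [pd]

lemma pd_a0_y (m : Fin 2) : pd m (fun y' => aCov webB 0 x y') y = 0 := by
  have hfun : (fun y' => aCov webB 0 x y') = fun _ : Fin 2 → ℝ => (0:ℝ) :=
    funext fun y' => aCov0_eq x y'
  rw [hfun]; simp [pd]

lemma pd_a1_x0 (hne : x 0 * x 1 * y 0 ≠ 0) :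
    pd 0 (fun x' => aCov webB 1 x' y) x = -(1 * x 1 * y 0) / (x 0 * x 1 * y 0) ^ 2 := by
  have hfun : (fun x' => aCov webB 1 x' y) = fun x' : Fin 2 → ℝ => (x' 0 * x' 1 * y 0)⁻¹ :=
    funext fun x' => aCov1_eq x' y
  have h : HasDerivAt (fun t : ℝ => (t * x 1 * y 0)⁻¹)
      (-(1 * x 1 * y 0) / (x 0 * x 1 * y 0) ^ 2) (x 0) :=
    ((((hasDerivAt_id (x 0)).mul_const (x 1)).mul_const (y 0))).inv hne
  rw [hfun]
  simp only [pd, Function.update_self, Function.update_of_ne (by decide : (1:Fin 2) ≠ 0)]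
  exact h.deriv

lemma pd_a1_x1 (hne : x 0 * x 1 * y 0 ≠ 0) :
    pd 1 (fun x' => aCov webB 1 x' y) x = -(x 0 * 1 * y 0) / (x 0 * x 1 * y 0) ^ 2 := by
  have hfun : (fun x' => aCov webB 1 x' y) = fun x' : Fin 2 → ℝ => (x' 0 * x' 1 * y 0)⁻¹ :=
    funext fun x' => aCov1_eq x' y
  have h : HasDerivAt (fun t : ℝ => (x 0 * t * y 0)⁻¹)
      (-(x 0 * 1 * y 0) / (x 0 * x 1 * y 0) ^ 2) (x 1) :=
    ((((hasDerivAt_id (x 1)).const_mul (x 0)).mul_const (y 0))).inv hne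
  rw [hfun]
  simp only [pd, Function.update_self, Function.update_of_ne (by decide : (0:Fin 2) ≠ 1)]
  exact h.deriv

lemma pd_a1_y0 (hne : x 0 * x 1 * y 0 ≠ 0) :
    pd 0 (fun y' => aCov webB 1 x y') y = -(x 0 * x 1 * 1) / (x 0 * x 1 * y 0) ^ 2 := by
  have hfun : (fun y' => aCov webB 1 x y') = fun y' : Fin 2 → ℝ => (x 0 * x 1 * y' 0)⁻¹ :=
    funext fun y' => aCov1_eq x y'
  have h : HasDerivAt (fun t : ℝ => (x 0 * x 1 * t)⁻¹)
      (-(x 0 * x 1 * 1) / (x 0 * x 1 * y 0) ^ 2) (y 0) :=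
    (((hasDerivAt_id (y 0)).const_mul (x 0 * x 1))).inv hne
  rw [hfun]
  simp only [pd, Function.update_self]
  exact h.deriv

lemma pd_a1_y1 : pd 1 (fun y' => aCov webB 1 x y') y = 0 := by
  have hfun : (fun y' => aCov webB 1 x y') = fun y' : Fin 2 → ℝ => (x 0 * x 1 * y' 0)⁻¹ :=
    funext fun y' => aCov1_eq x y'
  rw [hfun]
  simp only [pd, Function.update_of_ne (by decide : (0:Fin 2) ≠ 1)]
  simp

/-- For the web `webB` on the domain `x¹ ≠ 0, x² ≠ 0, y¹ ≠ 0`, the torsion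
covector satisfies `a₁ = 0` and `a₂ = 1/(x¹x²y¹)`, and the isoclinicity
invariants satisfy `p = q = e^{−x¹y¹}/(2(x¹x²y¹)²) ≠ 0`; hence the web is
nonisoclinic but, since `p = q`, it cannot be extended to a nonisoclinic
web `W(4,2,2)` (class G₃). -/
theorem webB_torsion_and_invariants (x y : Fin 2 → ℝ)
    (h1 : x 0 ≠ 0) (h2 : x 1 ≠ 0) (h3 : y 0 ≠ 0) :
    aCov webB 0 x y = 0 ∧
    aCov webB 1 x y = 1 / (x 0 * x 1 * y 0) ∧
    pIso webB x y = Real.exp (-(x 0 * y 0)) / (2 * (x 0 * x 1 * y 0)^2) ∧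
    qIso webB x y = Real.exp (-(x 0 * y 0)) / (2 * (x 0 * x 1 * y 0)^2) ∧
    pIso webB x y ≠ 0 := by
  have hne : x 0 * x 1 * y 0 ≠ 0 := mul_ne_zero (mul_ne_zero h1 h2) h3
  have hE := Real.exp_ne_zero (x 0 * y 0)
  have hp : pIso webB x y = Real.exp (-(x 0 * y 0)) / (2 * (x 0 * x 1 * y 0)^2) := by
    simp only [pIso, pCov, Fin.sum_univ_two, pd_a0_x, pd_a1_x0 x y hne, pd_a1_x1 x y hne]
    simp only [aCov0_eq, aCov1_eq, Gam1, fbar_inv, Matrix.smul_apply, smul_eq_mul,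
      Matrix.cons_val', Matrix.cons_val_zero, Matrix.cons_val_one, Matrix.head_cons,
      Matrix.empty_val', Matrix.cons_val_fin_one, Matrix.head_fin_const, Matrix.of_apply]
    rw [Real.exp_neg]
    field_simp
    ring
  have hq : qIso webB x y = Real.exp (-(x 0 * y 0)) / (2 * (x 0 * x 1 * y 0)^2) := by
    simp only [qIso, qCov, Fin.sum_univ_two, pd_a0_y, pd_a1_y0 x y hne, pd_a1_y1]
    simp only [aCov0_eq, aCov1_eq, Gam1, ftil_inv, Matrix.smul_apply, smul_eq_mul,
      Matrix.cons_val', Matrix.cons_val_zero, Matrix.cons_val_one, Matrix.head_cons,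
      Matrix.empty_val', Matrix.cons_val_fin_one, Matrix.head_fin_const, Matrix.of_apply]
    rw [Real.exp_neg]
    field_simp
    ring
  refine ⟨aCov0_eq x y, by rw [aCov1_eq, one_div], hp, hq, ?_⟩
  rw [hp]
  positivity

end
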